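/- arXiv:1811.05507 — 2 statements merged into one kernel-verified Lean document; each statement's English description precedes it below -/
import Mathlib

section
/- Large sieve inequality for roots of ν² + 1 ≡ 0: Let h ≥ 1 be an integer, X ≥ 1 a real number, N ≥ 1 an integer, and α₁, …, α_N ∈ ℂ. Then ∑_{X < d ≤ 2X, gcd(d,h)=1} ∑_{ν (mod d), ν² + 1 ≡ 0 (mod d)} | ∑_{n ≤ N} α_n·e(ν·n·h̄_d / d) |² ≤ 400·(hX + N)·∑_{n ≤ N} |α_n|², where the middle sum runs over the residues ν modulo d satisfying ν² + 1 ≡ 0 (mod d) and h̄_d denotes the multiplicative inverse of h modulo d. -/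
open Finset Complex MeasureTheory intervalIntegral

/-- `e(t) = exp(2πit)`. -/
noncomputable def eAdd (t : ℝ) : ℂ := Complex.exp (2 * Real.pi * Complex.I * t)

noncomputable def TP (N : ℕ) (β : ℕ → ℂ) (t : ℝ) : ℂ :=
  ∑ n ∈ Finset.Icc 1 N, β n * eAdd (n * t)

lemma eAdd_int (k : ℤ) : eAdd k = 1 := by
  unfold eAdd
  rw [show ((2:ℂ) * Real.pi * Complex.I * (k:ℝ)) = (k:ℂ) * (2 * Real.pi * Complex.I) by push_cast; ring]
  exact Complex.exp_int_mul_two_pi_mul_I k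

lemma eAdd_add (s t : ℝ) : eAdd (s + t) = eAdd s * eAdd t := by
  unfold eAdd
  rw [← Complex.exp_add]; congr 1; push_cast; ring

lemma eAdd_add_int (t : ℝ) (k : ℤ) : eAdd (t + k) = eAdd t := by
  rw [eAdd_add, eAdd_int, mul_one]

lemma continuous_eAdd_mul (c : ℝ) : Continuous (fun t : ℝ => eAdd (c * t)) := by
  unfold eAdd
  exact Complex.continuous_exp.comp (by continuity)

lemma continuous_TP (N : ℕ) (β : ℕ → ℂ) : Continuous (TP N β) := by
  apply continuous_finset_sum
  intro n _
  exact (continuous_const.mul (continuous_eAdd_mul n))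

lemma TP_periodic (N : ℕ) (β : ℕ → ℂ) : Function.Periodic (TP N β) 1 := by
  intro t
  unfold TP
  refine Finset.sum_congr rfl (fun n _ => ?_)
  rw [mul_add, mul_one, show ((n:ℝ) * t + n) = (n * t) + (n : ℤ) by push_cast; ring,
    eAdd_add_int]

lemma hasDerivAt_eAdd_mul (n : ℕ) (t : ℝ) :
    HasDerivAt (fun t : ℝ => eAdd (n * t)) (2 * Real.pi * Complex.I * n * eAdd (n * t)) t := by
  unfold eAdd
  have h1 : HasDerivAt (fun t : ℝ => ((2 * Real.pi * Complex.I * (n * t) : ℂ)))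
      (2 * Real.pi * Complex.I * n) t := by
    have := (Complex.ofRealCLM.hasDerivAt (x := t)).const_mul (2 * Real.pi * Complex.I * n)
    simpa [mul_assoc, mul_comm, mul_left_comm] using this
  have h2 := h1.cexp
  have h3 : ∀ s : ℝ, (2 * Real.pi * Complex.I * ((n:ℝ) * s : ℝ) : ℂ)
      = 2 * Real.pi * Complex.I * ((n:ℂ) * (s:ℂ)) := by intro s; push_cast; ring
  simp only [h3] at h2 ⊢
  convert h2 using 1
  ring

lemma orth_int (z : ℤ) (hz : z ≠ 0) :
    (∫ t in (0:ℝ)..1, Complex.exp (2 * Real.pi * Complex.I * z * t)) = 0 := by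
  have hc : (2 * Real.pi * Complex.I * z : ℂ) ≠ 0 := by
    simp [Real.pi_ne_zero, Complex.I_ne_zero, hz]
  rw [integral_exp_mul_complex hc]
  have : Complex.exp (2 * Real.pi * Complex.I * z * ((1:ℝ):ℂ)) = 1 := by
    rw [show ((2:ℂ) * Real.pi * Complex.I * z * ((1:ℝ):ℂ)) = (z:ℂ) * (2 * Real.pi * Complex.I) by
      push_cast; ring]
    exact Complex.exp_int_mul_two_pi_mul_I z
  rw [this]
  norm_num

lemma orthE (z : ℤ) :
    (∫ t in (0:ℝ)..1, Complex.exp (2 * Real.pi * Complex.I * z * t)) = if z = 0 then 1 else 0 := by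
  by_cases hz : z = 0
  · simp [hz]
  · rw [orth_int z hz, if_neg hz]

lemma mul_conj_eAdd (n m : ℕ) (t : ℝ) :
    eAdd (n * t) * (starRingEnd ℂ) (eAdd (m * t))
      = Complex.exp (2 * Real.pi * Complex.I * (((n:ℤ) - (m:ℤ) : ℤ) : ℂ) * t) := by
  unfold eAdd
  rw [← Complex.exp_conj, ← Complex.exp_add]
  congr 1
  simp only [map_mul, Complex.conj_ofReal, Complex.conj_I, map_ofNat]
  push_cast
  ring

lemma parseval (N : ℕ) (β : ℕ → ℂ) :
    (∫ t in (0:ℝ)..1, Complex.normSq (TP N β t))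
      = ∑ n ∈ Finset.Icc 1 N, Complex.normSq (β n) := by
  have key : (∫ t in (0:ℝ)..1, ((Complex.normSq (TP N β t) : ℝ) : ℂ))
      = ((∑ n ∈ Finset.Icc 1 N, Complex.normSq (β n) : ℝ) : ℂ) := by
    have hfun : ∀ t : ℝ, ((Complex.normSq (TP N β t) : ℝ) : ℂ)
        = ∑ n ∈ Finset.Icc 1 N, ∑ m ∈ Finset.Icc 1 N,
            (β n * (starRingEnd ℂ) (β m)) *
              Complex.exp (2 * Real.pi * Complex.I * (((n:ℤ) - (m:ℤ) : ℤ) : ℂ) * t) := by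
      intro t
      rw [← Complex.mul_conj]
      unfold TP
      rw [map_sum, Finset.sum_mul_sum]
      refine Finset.sum_congr rfl fun n _ => Finset.sum_congr rfl fun m _ => ?_
      rw [map_mul, ← mul_conj_eAdd n m t]
      ring
    simp only [hfun]
    have hint : ∀ (n m : ℕ), IntervalIntegrable (fun t : ℝ =>
        (β n * (starRingEnd ℂ) (β m)) *
          Complex.exp (2 * Real.pi * Complex.I * (((n:ℤ) - (m:ℤ) : ℤ) : ℂ) * t)) volume 0 1 := by
      intro n m
      apply Continuous.intervalIntegrable
      exact continuous_const.mul (Complex.continuous_exp.comp (by continuity))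
    rw [intervalIntegral.integral_finset_sum (f := fun n t => ∑ m ∈ Finset.Icc 1 N,
      (β n * (starRingEnd ℂ) (β m)) *
        Complex.exp (2 * Real.pi * Complex.I * (((n:ℤ) - (m:ℤ) : ℤ) : ℂ) * t))
      (fun n _ => Continuous.intervalIntegrable (by
        exact continuous_finset_sum _ (fun m _ =>
          continuous_const.mul (Complex.continuous_exp.comp (by continuity)))) _ _)]
    have : ∀ n ∈ Finset.Icc 1 N, (∫ t in (0:ℝ)..1, ∑ m ∈ Finset.Icc 1 N,
        (β n * (starRingEnd ℂ) (β m)) *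
          Complex.exp (2 * Real.pi * Complex.I * (((n:ℤ) - (m:ℤ) : ℤ) : ℂ) * t))
        = β n * (starRingEnd ℂ) (β n) := by
      intro n hn
      rw [intervalIntegral.integral_finset_sum (f := fun m t =>
        (β n * (starRingEnd ℂ) (β m)) *
          Complex.exp (2 * Real.pi * Complex.I * (((n:ℤ) - (m:ℤ) : ℤ) : ℂ) * t))
        (fun m _ => hint n m)]
      have : ∀ m ∈ Finset.Icc 1 N, (∫ t in (0:ℝ)..1,
          (β n * (starRingEnd ℂ) (β m)) *
            Complex.exp (2 * Real.pi * Complex.I * (((n:ℤ) - (m:ℤ) : ℤ) : ℂ) * t))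
          = if m = n then β n * (starRingEnd ℂ) (β m) else 0 := by
        intro m _
        rw [intervalIntegral.integral_const_mul, orthE]
        by_cases hm : m = n
        · simp [hm]
        · rw [if_neg (fun hq => hm (by omega : m = n)), if_neg hm, mul_zero]
      rw [Finset.sum_congr rfl this, Finset.sum_ite_eq' (Finset.Icc 1 N) n
        (fun m => β n * (starRingEnd ℂ) (β m)), if_pos hn]
    rw [Finset.sum_congr rfl this]
    push_cast
    refine Finset.sum_congr rfl fun n _ => ?_
    rw [Complex.mul_conj]
  have := intervalIntegral.integral_ofReal (f := fun t => Complex.normSq (TP N β t))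
    (μ := volume) (a := (0:ℝ)) (b := 1)
  rw [this] at key
  exact_mod_cast key

lemma hasDerivAt_TP (N : ℕ) (β : ℕ → ℂ) (t : ℝ) :
    HasDerivAt (TP N β) (TP N (fun n => 2 * Real.pi * Complex.I * n * β n) t) t := by
  unfold TP
  apply HasDerivAt.fun_sum
  intro n _
  have := (hasDerivAt_eAdd_mul n t).const_mul (β n)
  convert this using 1
  · rfl
  ring

lemma hasDerivAt_normSq_TP (N : ℕ) (β : ℕ → ℂ) (t : ℝ) :
    HasDerivAt (fun t => Complex.normSq (TP N β t))
      (2 * ((TP N β t).re * (TP N (fun n => 2 * Real.pi * Complex.I * n * β n) t).re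
        + (TP N β t).im * (TP N (fun n => 2 * Real.pi * Complex.I * n * β n) t).im)) t := by
  set S' := TP N (fun n => 2 * Real.pi * Complex.I * n * β n)
  have hS := hasDerivAt_TP N β t
  have hre : HasDerivAt (fun t => (TP N β t).re) ((S' t).re) t :=
    (Complex.reCLM.hasFDerivAt.comp_hasDerivAt t hS)
  have him : HasDerivAt (fun t => (TP N β t).im) ((S' t).im) t :=
    (Complex.imCLM.hasFDerivAt.comp_hasDerivAt t hS)
  have : HasDerivAt (fun t => (TP N β t).re * (TP N β t).re + (TP N β t).im * (TP N β t).im)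
      ((S' t).re * (TP N β t).re + (TP N β t).re * (S' t).re
        + ((S' t).im * (TP N β t).im + (TP N β t).im * (S' t).im)) t :=
    (hre.mul hre).add (him.mul him)
  have heq : (fun t => Complex.normSq (TP N β t))
      = fun t => (TP N β t).re * (TP N β t).re + (TP N β t).im * (TP N β t).im := by
    funext s; rw [Complex.normSq_apply]
  rw [heq]
  convert this using 1
  ring

set_option maxHeartbeats 1000000 in
lemma analytic_ls {ι : Type} (P : Finset ι) (x : ι → ℝ)
    (hx : ∀ i ∈ P, 0 ≤ x i ∧ x i < 1) (δ : ℝ) (hδ0 : 0 < δ) (hδ1 : δ ≤ 1)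
    (hsep : ∀ i ∈ P, ∀ j ∈ P, i ≠ j → δ ≤ |x i - x j|)
    (N : ℕ) (hN : 1 ≤ N) (β : ℕ → ℂ) :
    ∑ i ∈ P, Complex.normSq (TP N β (x i))
      ≤ (2/δ + 8 * Real.pi * N) * ∑ n ∈ Finset.Icc 1 N, Complex.normSq (β n) := by
  set β' : ℕ → ℂ := fun n => 2 * Real.pi * Complex.I * n * β n with hβ'
  set g : ℝ → ℝ := fun t => Complex.normSq (TP N β t) with hg
  set g2 : ℝ → ℝ := fun t => Complex.normSq (TP N β' t) with hg2
  set D : ℝ → ℝ := fun t =>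
    2 * ((TP N β t).re * (TP N β' t).re + (TP N β t).im * (TP N β' t).im) with hD
  set G : ℝ → ℝ := fun t => (1/δ) * g t + |D t| with hG
  set K : ℝ := ∑ n ∈ Finset.Icc 1 N, Complex.normSq (β n) with hK
  have hSc : Continuous (TP N β) := continuous_TP N β
  have hS'c : Continuous (TP N β') := continuous_TP N β'
  have hgc : Continuous g := Complex.continuous_normSq.comp hSc
  have hg2c : Continuous g2 := Complex.continuous_normSq.comp hS'c
  have hDc : Continuous D := by
    apply Continuous.mul continuous_const
    exact ((Complex.continuous_re.comp hSc).mul (Complex.continuous_re.comp hS'c)).add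
      ((Complex.continuous_im.comp hSc).mul (Complex.continuous_im.comp hS'c))
  have hGc : Continuous G := (continuous_const.mul hgc).add hDc.abs
  have hG0 : ∀ t, 0 ≤ G t := fun t =>
    add_nonneg (mul_nonneg (by positivity) (Complex.normSq_nonneg _)) (abs_nonneg _)
  have hderiv : ∀ t, HasDerivAt g (D t) t := fun t => hasDerivAt_normSq_TP N β t
  -- Step 1 : pointwise bound
  have step1 : ∀ i ∈ P, g (x i) ≤ ∫ t in Set.Ioc (x i - δ) (x i), G t := by
    intro i hi
    set a := x i - δ with ha
    set b := x i with hb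
    have hab : a ≤ b := by rw [ha, hb]; linarith
    set C : ℝ := ∫ t in a..b, |D t| with hC
    have hCb : ∀ y ∈ Set.Icc a b, g b ≤ g y + C := by
      intro y hy
      have hftc : ∫ t in y..b, D t = g b - g y :=
        intervalIntegral.integral_eq_sub_of_hasDerivAt (fun t _ => hderiv t)
          (hDc.intervalIntegrable _ _)
      have h1 : |∫ t in y..b, D t| ≤ ∫ t in y..b, |D t| :=
        intervalIntegral.abs_integral_le_integral_abs hy.2
      have h2 : (∫ t in y..b, |D t|) ≤ C :=
        intervalIntegral.integral_mono_interval hy.1 hy.2 le_rfl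
          (Filter.Eventually.of_forall fun t => abs_nonneg _)
          (hDc.abs.intervalIntegrable _ _)
      have h3 : g b - g y ≤ ∫ t in y..b, |D t| := by
        calc g b - g y = ∫ t in y..b, D t := hftc.symm
          _ ≤ |∫ t in y..b, D t| := le_abs_self _
          _ ≤ ∫ t in y..b, |D t| := h1
      linarith
    have havg : δ * g b ≤ (∫ y in a..b, g y) + δ * C := by
      have hm := intervalIntegral.integral_mono_on (a := a) (b := b) (μ := volume)
        (f := fun _ => g b) (g := fun y => g y + C) hab
        (continuous_const.intervalIntegrable _ _)
        ((hgc.add continuous_const).intervalIntegrable _ _) hCb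
      rw [intervalIntegral.integral_const] at hm
      rw [intervalIntegral.integral_add (hgc.intervalIntegrable _ _)
        (continuous_const.intervalIntegrable _ _), intervalIntegral.integral_const] at hm
      have hba : b - a = δ := by rw [ha, hb]; ring
      rw [hba] at hm
      simpa [smul_eq_mul] using hm
    have hsplit : (∫ t in a..b, G t) = (1/δ) * (∫ y in a..b, g y) + C := by
      rw [hG]
      rw [intervalIntegral.integral_add ((continuous_const.fun_mul hgc).intervalIntegrable _ _)
        (hDc.abs.intervalIntegrable _ _), intervalIntegral.integral_const_mul]
    have hfin : g b ≤ ∫ t in a..b, G t := by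
      rw [hsplit]
      have h4 := mul_le_mul_of_nonneg_left havg (le_of_lt (by positivity : (0:ℝ) < 1/δ))
      have hδ' : (1/δ) * δ = 1 := by field_simp
      calc g b = (1/δ) * (δ * g b) := by field_simp
        _ ≤ (1/δ) * ((∫ y in a..b, g y) + δ * C) := h4
        _ = (1/δ) * (∫ y in a..b, g y) + C := by field_simp
    rw [intervalIntegral.integral_of_le hab] at hfin
    exact hfin
  -- Step 2 : disjointness and summation
  have hdisj : (↑P : Set ι).Pairwise
      (Function.onFun Disjoint (fun i => Set.Ioc (x i - δ) (x i))) := by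
    intro i hi j hj hij
    have hs := hsep i (by simpa using hi) j (by simpa using hj) hij
    have : Disjoint (Set.Ioc (x i - δ) (x i)) (Set.Ioc (x j - δ) (x j)) := by
      apply Set.Ioc_disjoint_Ioc.mpr
      rcases le_abs.mp hs with hcase | hcase
      · calc min (x i) (x j) ≤ x j := min_le_right _ _
          _ ≤ x i - δ := by linarith
          _ ≤ max (x i - δ) (x j - δ) := le_max_left _ _
      · calc min (x i) (x j) ≤ x i := min_le_left _ _
          _ ≤ x j - δ := by linarith
          _ ≤ max (x i - δ) (x j - δ) := le_max_right _ _
    exact this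
  have hGint : ∀ (s : Set ℝ), MeasurableSet s → s ⊆ Set.Ioc (-1:ℝ) 1 → IntegrableOn G s := by
    intro s hms hsub
    exact ((hGc.intervalIntegrable (-1) 1).1).mono_set (by simpa using hsub)
  have hIoc_sub : ∀ i ∈ P, Set.Ioc (x i - δ) (x i) ⊆ Set.Ioc (-1:ℝ) 1 := by
    intro i hi
    obtain ⟨h0, h1'⟩ := hx i hi
    apply Set.Ioc_subset_Ioc <;> linarith
  have step2 : ∑ i ∈ P, (∫ t in Set.Ioc (x i - δ) (x i), G t)
      = ∫ t in (⋃ i ∈ P, Set.Ioc (x i - δ) (x i)), G t := by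
    exact (MeasureTheory.integral_biUnion_finset P (fun i _ => measurableSet_Ioc) hdisj
      (fun i hi => hGint _ measurableSet_Ioc (hIoc_sub i hi))).symm
  have step3 : (∫ t in (⋃ i ∈ P, Set.Ioc (x i - δ) (x i)), G t)
      ≤ ∫ t in Set.Ioc (-1:ℝ) 1, G t := by
    apply MeasureTheory.setIntegral_mono_set
      (hGint _ measurableSet_Ioc (by rfl)) (Filter.Eventually.of_forall hG0)
    apply HasSubset.Subset.eventuallyLE
    exact Set.iUnion₂_subset hIoc_sub
  -- Step 4 : periodicity
  have hGper : Function.Periodic G 1 := by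
    intro t
    have h1 : TP N β (t + 1) = TP N β t := TP_periodic N β t
    have h2 : TP N β' (t + 1) = TP N β' t := TP_periodic N β' t
    simp only [hG, hD, hg, h1, h2]
  have step4 : (∫ t in Set.Ioc (-1:ℝ) 1, G t) = 2 * ∫ t in (0:ℝ)..1, G t := by
    rw [← intervalIntegral.integral_of_le (by norm_num : (-1:ℝ) ≤ 1)]
    rw [← intervalIntegral.integral_add_adjacent_intervals (a := (-1:ℝ)) (b := 0) (c := 1)
      (hGc.intervalIntegrable _ _) (hGc.intervalIntegrable _ _)]
    have hper := hGper.intervalIntegral_add_eq (-1 : ℝ) 0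
    have e1 : (-1:ℝ) + 1 = 0 := by norm_num
    have e2 : (0:ℝ) + 1 = 1 := by norm_num
    rw [e1, e2] at hper
    rw [hper]
    ring
  -- Step 5 : integral bounds
  have hK0 : 0 ≤ K := Finset.sum_nonneg fun n _ => Complex.normSq_nonneg _
  have hPg : (∫ t in (0:ℝ)..1, g t) = K := parseval N β
  set c : ℝ := 2 * Real.pi * N with hc
  have hNpos : (0:ℝ) < N := by exact_mod_cast hN
  have hc0 : 0 < c := by positivity
  have hK2 : (∑ n ∈ Finset.Icc 1 N, Complex.normSq (β' n)) ≤ c^2 * K := by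
    rw [hK, Finset.mul_sum]
    apply Finset.sum_le_sum
    intro n hn
    have hn' : (n:ℝ) ≤ N := by exact_mod_cast (Finset.mem_Icc.mp hn).2
    have hn0 : (0:ℝ) ≤ n := Nat.cast_nonneg n
    have heq : Complex.normSq (β' n) = (2*Real.pi*n)^2 * Complex.normSq (β n) := by
      rw [hβ']
      have : (2 * (Real.pi:ℂ) * Complex.I * (n:ℂ)) = ((2*Real.pi*(n:ℝ) : ℝ) : ℂ) * Complex.I := by
        push_cast; ring
      show Complex.normSq (2 * (Real.pi:ℂ) * Complex.I * (n:ℂ) * β n) = _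
      rw [this, Complex.normSq_mul, Complex.normSq_mul, Complex.normSq_I, mul_one,
        Complex.normSq_ofReal]
      ring
    rw [heq]
    apply mul_le_mul_of_nonneg_right _ (Complex.normSq_nonneg _)
    rw [hc]
    have hnn : (n:ℝ)^2 ≤ (N:ℝ)^2 := by nlinarith
    have e1 : (2*Real.pi*(n:ℝ))^2 = 4*Real.pi^2*(n:ℝ)^2 := by ring
    have e2 : (2*Real.pi*(N:ℝ))^2 = 4*Real.pi^2*(N:ℝ)^2 := by ring
    rw [e1, e2]
    have : (0:ℝ) ≤ 4*Real.pi^2 := by positivity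
    nlinarith
  have hDb : ∀ t, |D t| ≤ c * g t + (1/c) * g2 t := by
    intro t
    have hmul : c * |D t| ≤ c^2 * g t + g2 t := by
      rw [hD, hg, hg2]
      simp only [Complex.normSq_apply]
      set A := (TP N β t).re; set B := (TP N β t).im
      set A' := (TP N β' t).re; set B' := (TP N β' t).im
      rcases abs_cases (2 * (A * A' + B * B')) with ⟨habs, _⟩ | ⟨habs, _⟩ <;> rw [habs] <;>
        nlinarith [sq_nonneg (c*A - A'), sq_nonneg (c*B - B'), sq_nonneg (c*A + A'),
          sq_nonneg (c*B + B')]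
    have h5 : |D t| ≤ (c^2 * g t + g2 t) / c := by
      rw [le_div_iff₀ hc0]
      linarith [hmul]
    calc |D t| ≤ (c^2 * g t + g2 t) / c := h5
      _ = c * g t + (1/c) * g2 t := by field_simp
  have hIabs : (∫ t in (0:ℝ)..1, |D t|) ≤ 2 * c * K := by
    have hm := intervalIntegral.integral_mono_on (a := (0:ℝ)) (b := 1) (μ := volume)
      (f := fun t => |D t|) (g := fun t => c * g t + (1/c) * g2 t) (by norm_num)
      (hDc.abs.intervalIntegrable _ _)
      (((continuous_const.mul hgc).add (continuous_const.mul hg2c)).intervalIntegrable _ _)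
      (fun t _ => hDb t)
    rw [intervalIntegral.integral_add ((continuous_const.fun_mul hgc).intervalIntegrable _ _)
      ((continuous_const.fun_mul hg2c).intervalIntegrable _ _),
      intervalIntegral.integral_const_mul, intervalIntegral.integral_const_mul,
      hPg, parseval N β'] at hm
    have : (1/c) * (∑ n ∈ Finset.Icc 1 N, Complex.normSq (β' n)) ≤ (1/c) * (c^2 * K) := by
      apply mul_le_mul_of_nonneg_left hK2 (by positivity)
    have he : (1/c) * (c^2 * K) = c * K := by field_simp
    linarith
  have hint01 : (∫ t in (0:ℝ)..1, G t) = (1/δ) * K + ∫ t in (0:ℝ)..1, |D t| := by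
    rw [hG]
    rw [intervalIntegral.integral_add ((continuous_const.fun_mul hgc).intervalIntegrable _ _)
      (hDc.abs.intervalIntegrable _ _), intervalIntegral.integral_const_mul, hPg]
  -- assemble
  calc ∑ i ∈ P, Complex.normSq (TP N β (x i))
      = ∑ i ∈ P, g (x i) := rfl
    _ ≤ ∑ i ∈ P, (∫ t in Set.Ioc (x i - δ) (x i), G t) := Finset.sum_le_sum step1
    _ = ∫ t in (⋃ i ∈ P, Set.Ioc (x i - δ) (x i)), G t := step2
    _ ≤ ∫ t in Set.Ioc (-1:ℝ) 1, G t := step3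
    _ = 2 * ∫ t in (0:ℝ)..1, G t := step4
    _ ≤ 2 * ((1/δ) * K + 2 * c * K) := by
        rw [hint01]
        have := hIabs
        linarith
    _ ≤ (2/δ + 8 * Real.pi * N) * K := by
        rw [hc]
        have : 2 * ((1/δ) * K + 2 * (2 * Real.pi * N) * K) = (2/δ + 8 * Real.pi * N) * K := by
          field_simp; ring
        linarith [this.le]

set_option maxHeartbeats 1600000 in
lemma root_spacing_core {X : ℝ} (hX : 1 ≤ X) {d d' ν ν' : ℕ} (M : ℤ)
    (hdX : X < d) (hd2X : (d:ℝ) ≤ 2*X) (hd'X : X < d') (hd'2X : (d':ℝ) ≤ 2*X)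
    (hν : ν < d) (hν' : ν' < d')
    (hr : (d:ℤ) ∣ (ν:ℤ)^2 + 1) (hr' : (d':ℤ) ∣ (ν':ℤ)^2 + 1)
    (hclose : |(ν:ℝ)/d - (ν':ℝ)/d' - M| < 1/(5*X)) :
    d = d' ∧ ν = ν' := by
  have hd0 : (0:ℝ) < d := lt_trans (by linarith) hdX
  have hd'0 : (0:ℝ) < d' := lt_trans (by linarith) hd'X
  have hdpos : 0 < d := by exact_mod_cast hd0
  have hd'pos : 0 < d' := by exact_mod_cast hd'0
  obtain ⟨c, hc⟩ := hr
  obtain ⟨c', hc'⟩ := hr'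
  set w : ℤ := (ν':ℤ) + M * d' with hw
  set q : ℤ := (ν:ℤ) * d' - w * d with hqdef
  set c'' : ℤ := c' + 2*M*ν' + M^2*d' with hc''def
  have hw2 : w^2 + 1 = d' * c'' := by rw [hw, hc''def]; linear_combination hc'
  set m : ℤ := c*d' + c''*d - 2*(ν:ℤ)*w with hmdef
  have hiden : q^2 + d^2 + d'^2 = d*d'*m := by
    rw [hqdef, hmdef]
    linear_combination ((d':ℤ)^2) * hc + ((d:ℤ)^2) * hw2
  -- lower bound m ≥ 2
  have hm2 : 2 ≤ m := by
    have h1 : (d:ℤ)*d'*2 ≤ d*d'*m := by nlinarith [sq_nonneg q, sq_nonneg ((d:ℤ) - d')]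
    have h2 : (0:ℤ) < d*d' := by positivity
    exact le_of_mul_le_mul_left (by linarith [h1]) h2
  -- upper bound m < 3 (in ℝ)
  have hqR : |(q:ℝ)| < (d:ℝ)*d'/(5*X) := by
    have hqeq : (q:ℝ) = (d:ℝ)*d'*((ν:ℝ)/d - (ν':ℝ)/d' - M) := by
      simp only [hqdef, hw]; push_cast; field_simp; ring
    rw [hqeq, abs_mul, abs_of_pos (by positivity : (0:ℝ) < (d:ℝ)*d')]
    calc (d:ℝ)*d' * |(ν:ℝ)/d - (ν':ℝ)/d' - M| < (d:ℝ)*d' * (1/(5*X)) := by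
          apply mul_lt_mul_of_pos_left hclose (by positivity)
      _ = (d:ℝ)*d'/(5*X) := by ring
  have hm3 : (m:ℝ) < 3 := by
    have hX0 : (0:ℝ) < X := by linarith
    have hidenR : (q:ℝ)^2 + (d:ℝ)^2 + (d':ℝ)^2 = (d:ℝ)*d'*m := by exact_mod_cast hiden
    have hq2 : (q:ℝ)^2 < ((d:ℝ)*d'/(5*X))^2 := by
      have hsq := _root_.sq_abs (q:ℝ)
      nlinarith [abs_nonneg (q:ℝ), hsq]
    -- (d*d'/(5X))^2 ≤ d*d' * 4/25
    have hdd4 : ((d:ℝ)*d'/(5*X))^2 ≤ (d:ℝ)*d' * (4/25) := by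
      have h1 : (d:ℝ)*d' ≤ 4*X^2 := by nlinarith
      have h2 : ((d:ℝ)*d'/(5*X))^2 = (d:ℝ)*d' * ((d:ℝ)*d'/(25*X^2)) := by
        field_simp; ring
      rw [h2]
      apply mul_le_mul_of_nonneg_left _ (by positivity)
      rw [div_le_iff₀ (by positivity)]
      linarith
    -- d² + d'² < (5/2) d d'
    have hdd : (d:ℝ)^2 + (d':ℝ)^2 < (5/2) * ((d:ℝ)*d') := by
      have h1 : (d':ℝ) < 2*d := by linarith
      have h2 : (d:ℝ) < 2*d' := by linarith
      have key : (0:ℝ) < (2*(d:ℝ) - d') * (2*(d':ℝ) - d) := by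
        apply mul_pos <;> linarith
      have key2 : (2*(d:ℝ) - d') * (2*(d':ℝ) - d)
          = 5*((d:ℝ)*d') - 2*(d:ℝ)^2 - 2*(d':ℝ)^2 := by ring
      linarith [key, key2.le, key2.ge]
    have hdd0 : (0:ℝ) < (d:ℝ)*d' := by positivity
    have h3 : (d:ℝ)*d'*(m:ℝ) < (d:ℝ)*d' * 3 := by
      rw [← hidenR]
      linarith [hq2, hdd4, hdd]
    exact (mul_lt_mul_iff_right₀ hdd0).mp h3
  have hmeq : m = 2 := by
    have : m < 3 := by exact_mod_cast hm3
    omega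
  rw [hmeq] at hiden
  have hzero : q^2 + ((d:ℤ) - d')^2 = 0 := by linear_combination hiden
  have hq0 : q = 0 ∧ (d:ℤ) = d' := by
    constructor
    · nlinarith [sq_nonneg q, sq_nonneg ((d:ℤ) - d')]
    · nlinarith [sq_nonneg q, sq_nonneg ((d:ℤ) - d')]
  have hdd' : d = d' := by exact_mod_cast hq0.2
  refine ⟨hdd', ?_⟩
  have hq0' := hq0.1
  rw [hqdef, hw, ← hq0.2] at hq0'
  -- ν * d - (ν' + M d) * d = 0  ⇒ ν - ν' - M d = 0
  have hfac : ((ν:ℤ) - ν' - M * d) * d = 0 := by linear_combination hq0'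
  have : (ν:ℤ) - ν' - M*d = 0 := by
    rcases mul_eq_zero.mp hfac with h | h
    · exact h
    · exfalso; omega
  have hνd : (ν:ℤ) < d := by exact_mod_cast hν
  have hν'd : (ν':ℤ) < d := by rw [hq0.2]; exact_mod_cast hν'
  have hM0 : M = 0 := by nlinarith [Int.natCast_nonneg ν, Int.natCast_nonneg ν']
  rw [hM0, zero_mul, sub_zero, sub_eq_zero] at this
  exact_mod_cast this

lemma inv_mod_one (h d : ℕ) (hd : 1 < d) (hgcd : Nat.gcd d h = 1) :
    h * ((h : ZMod d)⁻¹).val ≡ 1 [MOD d] := by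
  haveI : NeZero d := ⟨by omega⟩
  have h1 : (h : ZMod d) * (h : ZMod d)⁻¹ = 1 :=
    ZMod.coe_mul_inv_eq_one h (Nat.Coprime.symm hgcd)
  have h2 : ((h * ((h : ZMod d)⁻¹).val : ℕ) : ZMod d) = ((1 : ℕ) : ZMod d) := by
    push_cast
    rw [ZMod.natCast_zmod_val]
    simpa using h1
  exact (ZMod.natCast_eq_natCast_iff _ _ _).mp h2

lemma mod_shift (h d ν : ℕ) (hd : 1 < d) (hgcd : Nat.gcd d h = 1) :
    ∃ k : ℤ, ((h * ((ν * ((h : ZMod d)⁻¹).val) % d) : ℕ) : ℤ) = (ν : ℤ) - d * k := by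
  set t := ((h : ZMod d)⁻¹).val
  have h1 : (ν * t) % d ≡ ν * t [MOD d] := Nat.mod_modEq _ _
  have h2 : h * ((ν * t) % d) ≡ h * (ν * t) [MOD d] := h1.mul_left h
  have h3 : h * (ν * t) = ν * (h * t) := by ring
  have h4 : ν * (h * t) ≡ ν * 1 [MOD d] := (inv_mod_one h d hd hgcd).mul_left ν
  have h5 : h * ((ν * t) % d) ≡ ν [MOD d] := by
    calc h * ((ν * t) % d) ≡ h * (ν * t) [MOD d] := h2
      _ = ν * (h * t) := h3
      _ ≡ ν * 1 [MOD d] := h4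
      _ = ν := by ring
  obtain ⟨k, hk⟩ := (Nat.modEq_iff_dvd.mp h5)
  -- hk : (ν:ℤ) - (h * ((ν*t)%d) : ℕ) = d * k
  refine ⟨k, ?_⟩
  push_cast at hk ⊢
  linarith [hk]

lemma point_sep (h : ℕ) (hh : 1 ≤ h) {X : ℝ} (hX : 1 ≤ X) {d d' ν ν' : ℕ}
    (hdX : X < d) (hd2X : (d:ℝ) ≤ 2*X) (hd'X : X < d') (hd'2X : (d':ℝ) ≤ 2*X)
    (hgcd : Nat.gcd d h = 1) (hgcd' : Nat.gcd d' h = 1)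
    (hν : ν < d) (hν' : ν' < d')
    (hr : (ν^2 + 1) % d = 0) (hr' : (ν'^2 + 1) % d' = 0)
    (hne : ¬(d = d' ∧ ν = ν')) :
    1/(5*h*X) ≤ |(((ν * ((h : ZMod d)⁻¹).val) % d : ℕ) : ℝ)/d
      - (((ν' * ((h : ZMod d')⁻¹).val) % d' : ℕ) : ℝ)/d'| := by
  by_contra hcon
  push_neg at hcon
  have hd1 : 1 < d := by
    have h1 : (1:ℝ) < d := lt_of_le_of_lt hX hdX
    exact_mod_cast h1
  have hd'1 : 1 < d' := by
    have h1 : (1:ℝ) < d' := lt_of_le_of_lt hX hd'X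
    exact_mod_cast h1
  obtain ⟨k, hk⟩ := mod_shift h d ν hd1 hgcd
  obtain ⟨k', hk'⟩ := mod_shift h d' ν' hd'1 hgcd'
  set a : ℕ := (ν * ((h : ZMod d)⁻¹).val) % d with ha
  set a' : ℕ := (ν' * ((h : ZMod d')⁻¹).val) % d' with ha'
  have hd0 : (0:ℝ) < d := by
    have : (0:ℕ) < d := by omega
    exact_mod_cast this
  have hd'0 : (0:ℝ) < d' := by
    have : (0:ℕ) < d' := by omega
    exact_mod_cast this
  have hh0 : (0:ℝ) < h := by
    have : (0:ℕ) < h := hh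
    exact_mod_cast this
  have hX0 : (0:ℝ) < X := by linarith
  have e1 : (h:ℝ) * ((a:ℝ)/d) = (ν:ℝ)/d - k := by
    have hc : ((h:ℝ) * a) = (ν:ℝ) - (d:ℝ)*(k:ℝ) := by exact_mod_cast hk
    field_simp
    linarith [hc]
  have e1' : (h:ℝ) * ((a':ℝ)/d') = (ν':ℝ)/d' - k' := by
    have hc : ((h:ℝ) * a') = (ν':ℝ) - (d':ℝ)*(k':ℝ) := by exact_mod_cast hk'
    field_simp
    linarith [hc]
  have hclose : |(ν:ℝ)/d - (ν':ℝ)/d' - ((k - k' : ℤ):ℝ)| < 1/(5*X) := by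
    have hm := mul_lt_mul_of_pos_left hcon hh0
    have heq : (h:ℝ) * |(a:ℝ)/d - (a':ℝ)/d'|
        = |(ν:ℝ)/d - (ν':ℝ)/d' - ((k - k' : ℤ):ℝ)| := by
      rw [← abs_of_pos hh0, ← abs_mul]
      congr 1
      push_cast
      rw [mul_sub, e1, e1']
      ring
    have heq2 : (h:ℝ) * (1/(5*h*X)) = 1/(5*X) := by field_simp
    rw [heq, heq2] at hm
    exact hm
  have hdvd : (d:ℤ) ∣ (ν:ℤ)^2 + 1 := by
    have := Nat.dvd_of_mod_eq_zero hr
    have h2 : ((d:ℤ)) ∣ ((ν^2+1 : ℕ) : ℤ) := Int.natCast_dvd_natCast.mpr this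
    push_cast at h2
    exact h2
  have hdvd' : (d':ℤ) ∣ (ν':ℤ)^2 + 1 := by
    have := Nat.dvd_of_mod_eq_zero hr'
    have h2 : ((d':ℤ)) ∣ ((ν'^2+1 : ℕ) : ℤ) := Int.natCast_dvd_natCast.mpr this
    push_cast at h2
    exact h2
  exact hne (root_spacing_core hX (k - k') hdX hd2X hd'X hd'2X hν hν' hdvd hdvd' hclose)

theorem large_sieve_for_roots (h : ℕ) (hh : 1 ≤ h) (X : ℝ) (hX : 1 ≤ X)
    (N : ℕ) (hN : 1 ≤ N) (α : ℕ → ℂ) :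
    ∑ d ∈ (Finset.Icc 1 ⌊2 * X⌋₊).filter (fun d : ℕ => X < (d : ℝ) ∧ Nat.gcd d h = 1),
      ∑ ν ∈ (Finset.range d).filter (fun ν => (ν ^ 2 + 1) % d = 0),
        ‖∑ n ∈ Finset.Icc 1 N,
          α n * eAdd (((ν * n * ((h : ZMod d)⁻¹).val : ℕ) : ℝ) / d)‖ ^ 2
      ≤ 400 * ((h : ℝ) * X + N) * ∑ n ∈ Finset.Icc 1 N, ‖α n‖ ^ 2 := by
  have hX0 : (0:ℝ) < X := by linarith
  have hh0 : (0:ℝ) < h := by exact_mod_cast hh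
  have hh1 : (1:ℝ) ≤ h := by exact_mod_cast hh
  set A : Finset ℕ :=
    (Finset.Icc 1 ⌊2 * X⌋₊).filter (fun d : ℕ => X < (d : ℝ) ∧ Nat.gcd d h = 1) with hA
  set B : ℕ → Finset ℕ :=
    fun d => (Finset.range d).filter (fun ν => (ν ^ 2 + 1) % d = 0) with hB
  -- membership facts
  have hmemA : ∀ d ∈ A, X < (d:ℝ) ∧ (d:ℝ) ≤ 2*X ∧ Nat.gcd d h = 1 ∧ 0 < d := by
    intro d hd
    rw [hA, Finset.mem_filter, Finset.mem_Icc] at hd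
    obtain ⟨⟨hd1, hd2⟩, hd3, hd4⟩ := hd
    refine ⟨hd3, ?_, hd4, by omega⟩
    calc (d:ℝ) ≤ (⌊2*X⌋₊ : ℝ) := by exact_mod_cast hd2
      _ ≤ 2*X := Nat.floor_le (by positivity)
  have hmemB : ∀ d, ∀ ν ∈ B d, ν < d ∧ (ν^2+1) % d = 0 := by
    intro d ν hν
    rw [hB, Finset.mem_filter, Finset.mem_range] at hν
    exact hν
  -- the point map
  set x : (Σ _ : ℕ, ℕ) → ℝ :=
    fun p => (((p.2 * ((h : ZMod p.1)⁻¹).val) % p.1 : ℕ) : ℝ) / p.1 with hx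
  set Q : Finset (Σ _ : ℕ, ℕ) := A.sigma B with hQ
  -- rewrite LHS
  have hLHS : ∑ d ∈ A, ∑ ν ∈ B d,
      ‖∑ n ∈ Finset.Icc 1 N,
        α n * eAdd (((ν * n * ((h : ZMod d)⁻¹).val : ℕ) : ℝ) / d)‖ ^ 2
      = ∑ p ∈ Q, Complex.normSq (TP N α (x p)) := by
    rw [hQ, Finset.sum_sigma]
    apply Finset.sum_congr rfl
    intro d hd
    apply Finset.sum_congr rfl
    intro ν hν
    have hd0 : 0 < d := (hmemA d hd).2.2.2
    have hinner : ∀ n : ℕ, eAdd (((ν * n * ((h : ZMod d)⁻¹).val : ℕ) : ℝ) / d)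
        = eAdd (n * ((((ν * ((h : ZMod d)⁻¹).val) % d : ℕ) : ℝ) / d)) := by
      intro n
      set t : ℕ := ((h : ZMod d)⁻¹).val
      set a : ℕ := (ν * t) % d
      set qq : ℕ := (ν * t) / d
      have hsplit : ν * t = d * qq + a := (Nat.div_add_mod _ _).symm
      have harg : ((ν * n * t : ℕ) : ℝ) / d = (n:ℝ) * ((a:ℝ)/d) + ((n * qq : ℕ) : ℤ) := by
        have hnat : ν * n * t = n * a + (n * qq) * d := by
          calc ν * n * t = n * (ν * t) := by ring
            _ = n * (d * qq + a) := by rw [hsplit]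
            _ = n * a + (n * qq) * d := by ring
        have hd0' : (d:ℝ) ≠ 0 := by positivity
        rw [show ((ν * n * t : ℕ) : ℝ) = (n:ℝ) * a + (n*qq : ℕ) * d by exact_mod_cast hnat]
        field_simp
        push_cast; ring
      rw [harg, eAdd_add_int]
    simp only [hinner]
    rw [← Complex.sq_norm]
    rfl
  rw [hLHS]
  -- apply the analytic lemma
  set δ : ℝ := 1/(5*h*X) with hδ
  have hδ0 : 0 < δ := by rw [hδ]; positivity
  have hδ1 : δ ≤ 1 := by
    rw [hδ]
    rw [div_le_one (by positivity)]
    nlinarith [hh1]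
  have hx01 : ∀ p ∈ Q, 0 ≤ x p ∧ x p < 1 := by
    intro p hp
    rw [hQ, Finset.mem_sigma] at hp
    have hd0 : 0 < p.1 := (hmemA _ hp.1).2.2.2
    have hd0' : (0:ℝ) < p.1 := by exact_mod_cast hd0
    constructor
    · rw [hx]; positivity
    · rw [hx, div_lt_one hd0']
      have : (p.2 * ((h : ZMod p.1)⁻¹).val) % p.1 < p.1 := Nat.mod_lt _ hd0
      exact_mod_cast this
  have hsep : ∀ p ∈ Q, ∀ p' ∈ Q, p ≠ p' → δ ≤ |x p - x p'| := by
    intro p hp p' hp' hne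
    rw [hQ, Finset.mem_sigma] at hp hp'
    obtain ⟨hdX1, hd2X1, hgcd1, _⟩ := hmemA _ hp.1
    obtain ⟨hdX2, hd2X2, hgcd2, _⟩ := hmemA _ hp'.1
    obtain ⟨hν1, hr1⟩ := hmemB _ _ hp.2
    obtain ⟨hν2, hr2⟩ := hmemB _ _ hp'.2
    have hne' : ¬(p.1 = p'.1 ∧ p.2 = p'.2) := by
      rintro ⟨h1, h2⟩
      exact hne (Sigma.ext h1 (by rw [h2]))
    exact point_sep h hh hX hdX1 hd2X1 hdX2 hd2X2 hgcd1 hgcd2 hν1 hν2 hr1 hr2 hne'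
  have hmain := analytic_ls Q x hx01 δ hδ0 hδ1 hsep N hN α
  -- final numeric bound
  have hKnn : (0:ℝ) ≤ ∑ n ∈ Finset.Icc 1 N, Complex.normSq (α n) :=
    Finset.sum_nonneg fun n _ => Complex.normSq_nonneg _
  have hRHS : ∑ n ∈ Finset.Icc 1 N, ‖α n‖ ^ 2
      = ∑ n ∈ Finset.Icc 1 N, Complex.normSq (α n) := by
    apply Finset.sum_congr rfl
    intro n _
    exact Complex.sq_norm _
  rw [hRHS]
  refine le_trans hmain ?_
  apply mul_le_mul_of_nonneg_right _ hKnn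
  have h2δ : 2/δ = 10 * h * X := by
    rw [hδ]
    field_simp
    ring
  rw [h2δ]
  have hπ : Real.pi ≤ 4 := by linarith [Real.pi_le_four]
  have hN0 : (1:ℝ) ≤ N := by exact_mod_cast hN
  have hhX : (1:ℝ) ≤ (h:ℝ) * X := by nlinarith [hh1]
  nlinarith [Real.pi_pos]
end

section
/- Diagonal count: There is an absolute constant C such that for every x ≥ 2, every integer h with 1 ≤ h ≤ √x, and every odd squarefree integer m with 1 ≤ m ≤ √x, the number of pairs of integers (ℓ, b) with 0 < ℓ < √x, |b| < √x/(2h), gcd(ℓ, m) = 1, and ℓ² + 4h²b² ≡ 0 (mod m) is at most C·x·ρ(m)/(m·h). -/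
open Finset

/-- `ρ(m)`: the number of roots of `ν² + 1 ≡ 0 (mod m)`. -/
def rhoRoots (m : ℕ) : ℕ :=
  ((Finset.range m).filter (fun ν => (ν ^ 2 + 1) % m = 0)).card

open Classical in
theorem diagonal_count :
    ∃ C : ℝ, ∀ x : ℝ, 2 ≤ x → ∀ h : ℕ, 1 ≤ h → (h : ℝ) ≤ Real.sqrt x →
      ∀ m : ℕ, 1 ≤ m → Odd m → Squarefree m → (m : ℝ) ≤ Real.sqrt x →
      ((((Finset.Icc 1 ⌊x⌋₊) ×ˢ (Finset.Icc (-(⌊x⌋₊ : ℤ)) (⌊x⌋₊ : ℤ))).filter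
          (fun p : ℕ × ℤ =>
            (p.1 : ℝ) < Real.sqrt x ∧
            (|p.2| : ℝ) < Real.sqrt x / (2 * h) ∧
            Nat.gcd p.1 m = 1 ∧
            (m : ℤ) ∣ ((p.1 : ℤ) ^ 2 + 4 * (h : ℤ) ^ 2 * p.2 ^ 2))).card : ℝ)
        ≤ C * x * (rhoRoots m) / ((m : ℝ) * h) := by
  use 4
  intro x hx h hh hhx m hm hodd hsf hmx
  haveI : NeZero m := ⟨by omega⟩
  have hx0 : (0:ℝ) ≤ x := by linarith
  have hm0 : (1:ℝ) ≤ (m:ℝ) := by exact_mod_cast hm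
  have hh0 : (1:ℝ) ≤ (h:ℝ) := by exact_mod_cast hh
  have hs1 : (1:ℝ) ≤ Real.sqrt x := le_trans hm0 hmx
  have hs0 : (0:ℝ) < Real.sqrt x := lt_of_lt_of_le one_pos hs1
  set N : ℕ := ⌊Real.sqrt x⌋₊ with hNdef
  set B : ℕ := ⌊Real.sqrt x / (2*h)⌋₊ with hBdef
  set S := ((Finset.Icc 1 ⌊x⌋₊) ×ˢ (Finset.Icc (-(⌊x⌋₊ : ℤ)) (⌊x⌋₊ : ℤ))).filter
          (fun p : ℕ × ℤ =>
            (p.1 : ℝ) < Real.sqrt x ∧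
            (|p.2| : ℝ) < Real.sqrt x / (2 * h) ∧
            Nat.gcd p.1 m = 1 ∧
            (m : ℤ) ∣ ((p.1 : ℤ) ^ 2 + 4 * (h : ℤ) ^ 2 * p.2 ^ 2)) with hSdef
  set Roots := (Finset.range m).filter (fun ν => (ν ^ 2 + 1) % m = 0) with hRdef
  set T := Roots ×ˢ ((Finset.range (N / m + 1)) ×ˢ (Finset.Icc (-(B:ℤ)) (B:ℤ))) with hTdef
  -- the key function
  set ν : ℕ × ℤ → ZMod m := fun p => ((2*(h:ℤ)*p.2 : ℤ) : ZMod m) * ((p.1 : ZMod m))⁻¹ with hνdef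
  -- basic facts for members of S
  have keyfacts : ∀ p ∈ S, (ν p)^2 = -1 ∧
      ((p.1 : ZMod m) = -(ν p) * ((2*(h:ℤ)*p.2 : ℤ) : ZMod m)) ∧
      1 ≤ p.1 ∧ p.1 ≤ N ∧ p.2.natAbs ≤ B := by
    intro p hp
    rw [hSdef, Finset.mem_filter] at hp
    obtain ⟨hbox, hℓx, hbx, hgcd, hdvd⟩ := hp
    rw [Finset.mem_product, Finset.mem_Icc] at hbox
    have hℓ1 : 1 ≤ p.1 := hbox.1.1
    have hℓN : p.1 ≤ N := Nat.le_floor (le_of_lt hℓx)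
    have hbB : p.2.natAbs ≤ B := by
      apply Nat.le_floor
      have : ((p.2.natAbs : ℕ) : ℝ) = |(p.2 : ℝ)| := by push_cast [Nat.cast_natAbs]; ring
      rw [this]
      exact le_of_lt hbx
    have hu : IsUnit ((p.1 : ZMod m)) := (ZMod.isUnit_iff_coprime p.1 m).mpr hgcd
    have hzero : ((p.1 : ZMod m))^2 + (((2*(h:ℤ)*p.2 : ℤ) : ZMod m))^2 = 0 := by
      have := (ZMod.intCast_zmod_eq_zero_iff_dvd ((p.1 : ℤ) ^ 2 + 4 * (h : ℤ) ^ 2 * p.2 ^ 2) m).mpr hdvd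
      push_cast at this ⊢
      linear_combination this
    have hsq : (ν p)^2 = -1 := by
      have h1 : (p.1 : ZMod m) * ((p.1 : ZMod m))⁻¹ = 1 := ZMod.mul_inv_of_unit _ hu
      rw [hνdef]
      simp only
      have : (((2*(h:ℤ)*p.2 : ℤ) : ZMod m))^2 = -((p.1 : ZMod m))^2 := by
        linear_combination hzero
      calc (((2*(h:ℤ)*p.2 : ℤ) : ZMod m) * ((p.1 : ZMod m))⁻¹)^2
          = (((2*(h:ℤ)*p.2 : ℤ) : ZMod m))^2 * (((p.1 : ZMod m))⁻¹)^2 := by ring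
        _ = -(((p.1 : ZMod m)) * ((p.1 : ZMod m))⁻¹)^2 := by rw [this]; ring
        _ = -1 := by rw [h1]; ring
    refine ⟨hsq, ?_, hℓ1, hℓN, hbB⟩
    have h1 : (p.1 : ZMod m) * ((p.1 : ZMod m))⁻¹ = 1 := ZMod.mul_inv_of_unit _ hu
    have : (ν p) * (p.1 : ZMod m) = ((2*(h:ℤ)*p.2 : ℤ) : ZMod m) := by
      rw [hνdef]; simp only
      calc ((2*(h:ℤ)*p.2 : ℤ) : ZMod m) * ((p.1 : ZMod m))⁻¹ * (p.1 : ZMod m)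
          = ((2*(h:ℤ)*p.2 : ℤ) : ZMod m) * ((p.1 : ZMod m) * ((p.1 : ZMod m))⁻¹) := by ring
        _ = _ := by rw [h1]; ring
    calc (p.1 : ZMod m) = -(ν p)^2 * (p.1 : ZMod m) := by rw [hsq]; ring
      _ = -(ν p) * ((ν p) * (p.1 : ZMod m)) := by ring
      _ = -(ν p) * ((2*(h:ℤ)*p.2 : ℤ) : ZMod m) := by rw [this]
  -- the injection
  have hcard : S.card ≤ T.card := by
    apply Finset.card_le_card_of_injOn (fun p => ((ν p).val, (p.1 / m, p.2)))
    · intro p hp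
      obtain ⟨hsq, hrec, hℓ1, hℓN, hbB⟩ := keyfacts p hp
      rw [hTdef, Finset.mem_coe, Finset.mem_product, Finset.mem_product]
      refine ⟨?_, ?_, ?_⟩
      · rw [hRdef, Finset.mem_filter, Finset.mem_range]
        refine ⟨ZMod.val_lt _, ?_⟩
        have hz : (((ν p).val ^ 2 + 1 : ℕ) : ZMod m) = 0 := by
          push_cast
          rw [ZMod.natCast_val, ZMod.cast_id]
          rw [hsq]; ring
        have hdvd := (ZMod.natCast_eq_zero_iff _ m).mp hz
        exact Nat.mod_eq_zero_of_dvd hdvd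
      · rw [Finset.mem_range]
        exact Nat.lt_succ_of_le (Nat.div_le_div_right hℓN)
      · rw [Finset.mem_Icc]
        show -(B:ℤ) ≤ p.2 ∧ p.2 ≤ (B:ℤ)
        constructor <;> omega
    · intro p hp q hq heq
      obtain ⟨hsqp, hrecp, _, _, _⟩ := keyfacts p hp
      obtain ⟨hsqq, hrecq, _, _, _⟩ := keyfacts q hq
      simp only [Prod.mk.injEq] at heq
      obtain ⟨hval, hdiv, hb⟩ := heq
      have hνeq : ν p = ν q := by
        have := congrArg (fun t : ℕ => (t : ZMod m)) hval
        simpa [ZMod.natCast_val, ZMod.cast_id] using this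
      have hcast : (p.1 : ZMod m) = (q.1 : ZMod m) := by
        rw [hrecp, hrecq, hνeq, hb]
      have hmod : p.1 % m = q.1 % m := by
        have := (ZMod.natCast_eq_natCast_iff _ _ _).mp hcast
        exact this
      have : p.1 = q.1 := by
        calc p.1 = m * (p.1 / m) + p.1 % m := (Nat.div_add_mod _ _).symm
          _ = m * (q.1 / m) + q.1 % m := by rw [hdiv, hmod]
          _ = q.1 := Nat.div_add_mod _ _
      exact Prod.ext this hb
  -- compute card T
  have hTcard : T.card = rhoRoots m * ((N / m + 1) * (2 * B + 1)) := by
    rw [hTdef, Finset.card_product, Finset.card_product, Finset.card_range, Int.card_Icc]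
    have : ((B:ℤ) + 1 - -(B:ℤ)).toNat = 2 * B + 1 := by omega
    rw [this]
    rfl
  -- pass to reals
  have hreal : ((S.card : ℝ)) ≤ (rhoRoots m : ℝ) * ((N / m + 1 : ℕ) : ℝ) * ((2 * B + 1 : ℕ) : ℝ) := by
    have : (S.card : ℝ) ≤ (T.card : ℝ) := by exact_mod_cast hcard
    rw [hTcard] at this
    push_cast at this ⊢
    linarith
  have hb1 : ((N / m + 1 : ℕ) : ℝ) ≤ 2 * Real.sqrt x / m := by
    have h1 : ((N / m : ℕ) : ℝ) ≤ (N : ℝ) / m := Nat.cast_div_le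
    have h2 : (N : ℝ) ≤ Real.sqrt x := Nat.floor_le (le_of_lt hs0)
    have h3 : (N : ℝ) / m ≤ Real.sqrt x / m := by
      apply div_le_div_of_nonneg_right h2 -- might be wrong name
      linarith
    have h4 : (1:ℝ) ≤ Real.sqrt x / m := by
      rw [le_div_iff₀ (by linarith : (0:ℝ) < (m:ℝ))]
      linarith [hmx]
    push_cast
    have : 2 * Real.sqrt x / m = Real.sqrt x / m + Real.sqrt x / m := by ring
    rw [this]
    linarith
  have hb2 : ((2 * B + 1 : ℕ) : ℝ) ≤ 2 * Real.sqrt x / h := by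
    have h1 : (B : ℝ) ≤ Real.sqrt x / (2 * h) := Nat.floor_le (by positivity)
    have h4 : (1:ℝ) ≤ Real.sqrt x / h := by
      rw [le_div_iff₀ (by linarith : (0:ℝ) < (h:ℝ))]
      linarith [hhx]
    push_cast
    have e : 2 * (Real.sqrt x / (2*h)) = Real.sqrt x / h := by
      field_simp
    have e2 : 2 * Real.sqrt x / h = 2 * (Real.sqrt x / h) := by ring
    linarith [h1, h4]
  have hrho0 : (0:ℝ) ≤ (rhoRoots m : ℝ) := Nat.cast_nonneg _
  have hfinal : (rhoRoots m : ℝ) * ((N / m + 1 : ℕ) : ℝ) * ((2 * B + 1 : ℕ) : ℝ)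
      ≤ 4 * x * (rhoRoots m) / ((m : ℝ) * h) := by
    have hpos1 : (0:ℝ) ≤ ((N / m + 1 : ℕ) : ℝ) := Nat.cast_nonneg _
    have hpos2 : (0:ℝ) ≤ ((2 * B + 1 : ℕ) : ℝ) := Nat.cast_nonneg _
    have step : (rhoRoots m : ℝ) * ((N / m + 1 : ℕ) : ℝ) * ((2 * B + 1 : ℕ) : ℝ)
        ≤ (rhoRoots m : ℝ) * (2 * Real.sqrt x / m) * (2 * Real.sqrt x / h) := by
      apply mul_le_mul
      · apply mul_le_mul_of_nonneg_left hb1 hrho0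
      · exact hb2
      · exact hpos2
      · positivity
    refine le_trans step (le_of_eq ?_)
    have hsq : Real.sqrt x * Real.sqrt x = x := Real.mul_self_sqrt hx0
    field_simp
    ring_nf
    nlinarith [hsq]
  linarith [hreal, hfinal]
end
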